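/- Define two norms on a vector space related by |||A|||_E = sup_{t>0} ‖A‖_{tE}/√(1+t) and ‖A‖_E = inf_{t>0} |||A|||_{tE}·√(1+1/t) for a family of norms (‖·‖_E)_{E>0} with E ↦ (‖A‖_E)² concave and nondecreasing. Then √(1/2)·‖A‖_E ≤ |||A|||_E ≤ ‖A‖_E for all E > 0. -/

import Mathlib

open Filter Topology

/-- Key lemma: for `f` concave and nonneg on `(0,∞)`, `f (t*E) ≤ t * f E` for `t ≥ 1`. -/
lemma concave_scale_bound (f : ℝ → ℝ) (hf : ConcaveOn ℝ (Set.Ioi 0) f)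
    (hnn : ∀ x ∈ Set.Ioi (0:ℝ), 0 ≤ f x)
    {E t : ℝ} (hE : 0 < E) (ht : 1 ≤ t) : f (t * E) ≤ t * f E := by
  have htpos : (0:ℝ) < t := lt_of_lt_of_le one_pos ht
  have key : ∀ x ∈ Set.Ioo (0:ℝ) E, f (t * E) ≤ f E * ((t * E - x) / (E - x)) := by
    intro x hx
    obtain ⟨hx0, hxE⟩ := hx
    have hxtE : x < t * E := lt_of_lt_of_le hxE (le_mul_of_one_le_left hE.le ht)
    have hden : 0 < t * E - x := by linarith
    have hden2 : 0 < E - x := by linarith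
    obtain ⟨lam, hlam⟩ : ∃ l : ℝ, l = (E - x) / (t * E - x) := ⟨_, rfl⟩
    have hlampos : 0 < lam := hlam ▸ div_pos hden2 hden
    have hlam0 : 0 ≤ lam := hlampos.le
    have hlam1 : lam ≤ 1 := by
      rw [hlam, div_le_one hden]
      nlinarith
    have hcomb : lam * (t * E) + (1 - lam) * x = E := by
      rw [hlam, div_mul_eq_mul_div, one_sub_div hden.ne', div_mul_eq_mul_div, ← add_div, div_eq_iff hden.ne']; ring
    have h := hf.2 (show t * E ∈ Set.Ioi (0:ℝ) from mul_pos htpos hE)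
      (show x ∈ Set.Ioi (0:ℝ) from hx0) hlam0
      (show (0:ℝ) ≤ 1 - lam by linarith)
      (show lam + (1 - lam) = 1 by ring)
    rw [smul_eq_mul, smul_eq_mul, smul_eq_mul, smul_eq_mul, hcomb] at h
    have hfx : 0 ≤ f x := hnn x hx0
    have hlamf : lam * f (t * E) ≤ f E := by nlinarith
    calc f (t * E) = (lam * f (t * E)) / lam := by
            field_simp
      _ ≤ f E / lam := by gcongr
      _ = f E * ((t * E - x) / (E - x)) := by
          rw [hlam, div_div_eq_mul_div, mul_div_assoc]
  -- take the limit x → 0⁺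
  have htend : Tendsto (fun x => f E * ((t * E - x) / (E - x))) (𝓝[>] (0:ℝ))
      (𝓝 (t * f E)) := by
    have : Tendsto (fun x => f E * ((t * E - x) / (E - x))) (𝓝 (0:ℝ))
        (𝓝 (f E * ((t * E - 0) / (E - 0)))) := by
      apply Tendsto.const_mul
      apply Tendsto.div
      · exact (tendsto_const_nhds.sub tendsto_id)
      · exact (tendsto_const_nhds.sub tendsto_id)
      · simp [ne_of_gt hE]
    have heq : f E * ((t * E - 0) / (E - 0)) = t * f E := by
      rw [sub_zero, sub_zero, mul_div_assoc, div_self hE.ne', mul_one, mul_comm]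
    rw [heq] at this
    exact this.mono_left nhdsWithin_le_nhds
  refine ge_of_tendsto htend ?_
  filter_upwards [Ioo_mem_nhdsGT hE] with x hx
  exact key x hx

/-- relation (6), abstract form: for `g : (0,∞) → [0,∞)` nondecreasing
with `g²` concave, the function `h(E) = sup_{t>0} g(tE)/√(1+t)` satisfies
`√(1/2)·g(E) ≤ h(E) ≤ g(E)` for all `E > 0`. -/
theorem equivalent_norms_relation
    (g : ℝ → ℝ) (hnonneg : ∀ E ∈ Set.Ioi (0:ℝ), 0 ≤ g E)
    (hmono : MonotoneOn g (Set.Ioi 0))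
    (hconc : ConcaveOn ℝ (Set.Ioi 0) (fun E => (g E) ^ 2)) :
    ∀ E > 0,
      Real.sqrt (1/2) * g E ≤ sSup {y : ℝ | ∃ t > 0, y = g (t * E) / Real.sqrt (1 + t)} ∧
      sSup {y : ℝ | ∃ t > 0, y = g (t * E) / Real.sqrt (1 + t)} ≤ g E := by
  intro E hE
  have hgE : 0 ≤ g E := hnonneg E hE
  -- every element of the set is ≤ g E
  have hub : ∀ y ∈ {y : ℝ | ∃ t > 0, y = g (t * E) / Real.sqrt (1 + t)}, y ≤ g E := by
    rintro y ⟨t, ht, rfl⟩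
    have htE : 0 < t * E := mul_pos ht hE
    have hsq : Real.sqrt (1 + t) ≥ 1 := by
      have h := Real.sqrt_le_sqrt (show (1:ℝ) ≤ 1 + t by linarith)
      simpa using h
    have hsqpos : 0 < Real.sqrt (1 + t) := lt_of_lt_of_le one_pos hsq
    rw [div_le_iff₀ hsqpos]
    rcases le_total t 1 with h1 | h1
    · calc g (t * E) ≤ g E := hmono htE hE (by nlinarith)
        _ ≤ g E * Real.sqrt (1 + t) := le_mul_of_one_le_right hgE hsq
    · have hkey : g (t * E) ^ 2 ≤ t * g E ^ 2 :=
        concave_scale_bound (fun E => g E ^ 2) hconc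
          (fun x _ => sq_nonneg _) hE h1
      have h2 : g (t * E) ^ 2 ≤ (1 + t) * g E ^ 2 := by nlinarith
      have hgtE : 0 ≤ g (t * E) := hnonneg _ htE
      have hsqeq : g (t * E) ^ 2 ≤ (g E * Real.sqrt (1 + t)) ^ 2 := by
        rw [mul_pow, Real.sq_sqrt (show (0:ℝ) ≤ 1 + t by linarith)]
        nlinarith
      exact (pow_le_pow_iff_left₀ hgtE (by positivity) two_ne_zero).mp hsqeq
  constructor
  · -- lower bound: take t = 1
    have hmem : g (1 * E) / Real.sqrt (1 + 1) ∈
        {y : ℝ | ∃ t > 0, y = g (t * E) / Real.sqrt (1 + t)} := ⟨1, one_pos, rfl⟩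
    have hbdd : BddAbove {y : ℝ | ∃ t > 0, y = g (t * E) / Real.sqrt (1 + t)} := ⟨g E, hub⟩
    have := le_csSup hbdd hmem
    have heq : Real.sqrt (1/2) * g E = g (1 * E) / Real.sqrt (1 + 1) := by
      rw [one_mul, show (1:ℝ) + 1 = 2 by norm_num, eq_div_iff (by positivity)]
      rw [mul_comm (Real.sqrt (1/2)) (g E), mul_assoc, ← Real.sqrt_mul (by norm_num)]
      norm_num
    linarith
  · exact Real.sSup_le hub hgE
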